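/- For every n ≥ 3, the point of [0,1] with periodic binary expansion (011 1^{n-3})^∞, i.e., x = (2^n - 2^{n-2} - 1)/(2^n - 1), generates an n-cycle of the doubling map T that is disjoint from the open interval (0, 3/7). -/
import Mathlib


noncomputable def T (x : ℝ) : ℝ := if x ≤ 1/2 then 2*x else 2*x - 1

/-- `C` is an `n`-cycle (periodic orbit of prime period `n`) for the doubling map. -/
def IsCycle (n : ℕ) (C : Set ℝ) : Prop :=
  ∃ x : ℝ, x ∈ Set.Icc (0:ℝ) 1 ∧ T^[n] x = x ∧
    (∀ i < n, ∀ j < n, i ≠ j → T^[i] x ≠ T^[j] x) ∧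
    C = {y | ∃ i < n, T^[i] x = y}

noncomputable def fa (n k : ℕ) : ℝ := 1 - 2^(k % n) / ((2:ℝ)^n - 1)

lemma eight_le (n : ℕ) (hn : 3 ≤ n) : (8:ℝ) ≤ 2^n := by
  calc (8:ℝ) = 2^3 := by norm_num
  _ ≤ 2^n := pow_le_pow_right₀ (by norm_num) hn

lemma fa_step (n : ℕ) (hn : 3 ≤ n) (k : ℕ) : T (fa n k) = fa n (k+1) := by
  have h8 := eight_le n hn
  have hNpos : (0:ℝ) < 2^n - 1 := by linarith
  have hk : k % n < n := Nat.mod_lt _ (by omega)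
  have hmod : (k + 1) % n = (k % n + 1) % n := by
    rw [Nat.add_mod, Nat.mod_eq_of_lt (show 1 < n by omega)]
  unfold fa T
  by_cases h : k % n + 1 = n
  · have hpow : (2:ℝ)^n = 2 * 2^(k % n) := by
      conv_lhs => rw [show n = k % n + 1 from h.symm]
      rw [pow_succ]; ring
    have hle : 1 - 2^(k % n) / ((2:ℝ)^n - 1) ≤ 1/2 := by
      have h1 : (1:ℝ)/2 ≤ 2^(k % n) / (2^n - 1) := by
        rw [div_le_div_iff₀ (by norm_num) hNpos]; nlinarith
      linarith
    have hmod0 : (k + 1) % n = 0 := by rw [hmod, h, Nat.mod_self]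
    rw [if_pos hle, hmod0]
    field_simp
    nlinarith
  · have hk1 : k % n + 1 < n := by omega
    have hp : (2:ℝ)^(k % n + 1) ≤ 2^(n-1) := pow_le_pow_right₀ (by norm_num) (by omega)
    have hp2 : (2:ℝ)^(n-1) * 2 = 2^n := by
      rw [← pow_succ]; congr 1; omega
    have hps : (2:ℝ)^(k % n + 1) = 2 * 2^(k % n) := by rw [pow_succ]; ring
    have hlt : ¬ (1 - 2^(k % n) / ((2:ℝ)^n - 1) ≤ 1/2) := by
      push_neg
      have h1 : 2^(k % n) / ((2:ℝ)^n - 1) < 1/2 := by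
        rw [div_lt_div_iff₀ hNpos (by norm_num)]; nlinarith
      linarith
    rw [if_neg hlt, hmod, Nat.mod_eq_of_lt hk1]
    field_simp
    linarith [hps]

lemma fa_iter (n : ℕ) (hn : 3 ≤ n) (i k : ℕ) : T^[i] (fa n k) = fa n (k + i) := by
  induction i generalizing k with
  | zero => simp
  | succ m ih =>
    rw [Function.iterate_succ_apply, fa_step n hn k, ih]
    congr 1; omega

lemma fa_ge (n : ℕ) (hn : 3 ≤ n) (k : ℕ) : 3/7 ≤ fa n k := by
  have h8 := eight_le n hn
  have hNpos : (0:ℝ) < 2^n - 1 := by linarith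
  unfold fa
  have hk : k % n < n := Nat.mod_lt _ (by omega)
  have hp : (2:ℝ)^(k % n) ≤ 2^(n-1) := pow_le_pow_right₀ (by norm_num) (by omega)
  have hp2 : (2:ℝ)^(n-1) * 2 = 2^n := by rw [← pow_succ]; congr 1; omega
  have h4 : (4:ℝ) ≤ 2^(n-1) := by nlinarith
  have hd : 2^(k % n) / ((2:ℝ)^n - 1) ≤ 4/7 := by
    rw [div_le_div_iff₀ hNpos (by norm_num)]; nlinarith
  linarith

lemma fa_le_one (n : ℕ) (hn : 3 ≤ n) (k : ℕ) : fa n k ≤ 1 := by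
  have h8 := eight_le n hn
  have hNpos : (0:ℝ) < 2^n - 1 := by linarith
  unfold fa
  have : (0:ℝ) ≤ 2^(k % n) / (2^n - 1) := by positivity
  linarith

lemma fa_inj (n : ℕ) (hn : 3 ≤ n) (a b : ℕ) (h : fa n a = fa n b) : a % n = b % n := by
  have h8 := eight_le n hn
  have hNpos : (0:ℝ) < 2^n - 1 := by linarith
  unfold fa at h
  have hpow : (2:ℝ)^(a % n) = 2^(b % n) := by
    have h2 : 2^(a % n) / ((2:ℝ)^n - 1) = 2^(b % n) / ((2:ℝ)^n - 1) := by linarith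
    rw [div_eq_div_iff (ne_of_gt hNpos) (ne_of_gt hNpos)] at h2
    exact mul_right_cancel₀ (ne_of_gt hNpos) h2
  by_contra hne
  rcases Nat.lt_or_ge (a % n) (b % n) with hlt | hge
  · exact absurd hpow (ne_of_lt (pow_lt_pow_right₀ (by norm_num) hlt))
  · have hlt : b % n < a % n := by omega
    exact absurd hpow.symm (ne_of_lt (pow_lt_pow_right₀ (by norm_num) hlt))

theorem stmt_8 (n : ℕ) (hn : 3 ≤ n) :
    IsCycle n {y : ℝ | ∃ i < n, T^[i] (((2:ℝ)^n - 2^(n-2) - 1) / (2^n - 1)) = y} ∧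
    {y : ℝ | ∃ i < n, T^[i] (((2:ℝ)^n - 2^(n-2) - 1) / (2^n - 1)) = y} ∩
      Set.Ioo (0:ℝ) (3/7) = ∅ := by
  have h8 := eight_le n hn
  have hNpos : (0:ℝ) < 2^n - 1 := by linarith
  have hx : ((2:ℝ)^n - 2^(n-2) - 1) / (2^n - 1) = fa n (n-2) := by
    unfold fa
    rw [Nat.mod_eq_of_lt (by omega)]
    field_simp
    ring
  constructor
  · refine ⟨((2:ℝ)^n - 2^(n-2) - 1) / (2^n - 1), ⟨?_, ?_⟩, ?_, ?_, rfl⟩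
    · rw [hx]; linarith [fa_ge n hn (n-2)]
    · rw [hx]; exact fa_le_one n hn (n-2)
    · rw [hx, fa_iter n hn n (n-2)]
      unfold fa
      rw [Nat.add_mod_right]
    · intro i hi j hj hij
      rw [hx, fa_iter n hn i (n-2), fa_iter n hn j (n-2)]
      intro heq
      have hm := fa_inj n hn (n-2+i) (n-2+j) heq
      have hme : (n-2+i) ≡ (n-2+j) [MOD n] := hm
      have h2 := Nat.ModEq.add_left_cancel' (n-2) hme
      rw [Nat.ModEq, Nat.mod_eq_of_lt hi, Nat.mod_eq_of_lt hj] at h2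
      exact hij h2
  · apply Set.eq_empty_of_forall_notMem
    rintro y ⟨hmem, hIoo⟩
    obtain ⟨i, hi, hiy⟩ := hmem
    rw [Set.mem_Ioo] at hIoo
    rw [hx, fa_iter n hn i (n-2)] at hiy
    have := fa_ge n hn (n-2+i)
    linarith [hIoo.2, hiy ▸ this]
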